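/- Consider a commutative diagram of group stacks with three horizontal fiber sequences H' → H → H'', G' → G → G'', K' → K → K'' and vertical morphisms H' → G' ← K', H → G ← K, H'' → G'' ← K''. Then for any point H''g''K'' ∈ H''\G''/K'', the (homotopy) fiber of the induced map of double quotient stacks H\G/K → H''\G''/K'' at H''g''K'' is canonically isomorphic to the double quotient stack H'\G'/(K')^{g''}, where (K')^{g''} is the conjugate of K' by a lift g ∈ G of g'' acting as an outer automorphism of G' (so that (K')^{g''} is well-defined up to conjugation, and the isomorphism is well-defined up to conjugation by elements of H'). Explicitly, the isomorphism descends from the map G' → F_{g''}, x ↦ H''xgK''. -/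

import Mathlib

/-!
# Statement 12 (fiber of a map of double quotient stacks)

Given a commutative diagram of groups with horizontal fiber sequences
`H' → H → H''`, `G' → G → G''`, `K' → K → K''` (vertical maps being inclusions of
subgroups), for any point `H''g''K''` of `H''\\G''/K''` the homotopy fiber of the induced
map of double quotient stacks `H\\G/K → H''\\G''/K''` at `H''g''K''` is canonically
equivalent to `H'\\G'/(K')^{g''}`, where `(K')^{g''}` is the conjugate of `K'` by a lift
`g ∈ G` of `g''`; the equivalence descends from `x ↦ H''·x·g·K''`.

Formalization (at the level of `1`-groupoids, i.e. for ordinary groups): the double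
quotient stack `H\\G/K` is modeled by the double-coset groupoid `DoubleCoset G H K`
(objects: elements of `G`; morphisms `a ⟶ b`: pairs `(h, k) ∈ H × K` with `h·a·k = b`).
The diagram is encoded by a surjection `π : G →* G''` (so `G' = ker π`, giving the fiber
sequence `G' → G → G''`) and subgroups `H, K ≤ G`, `H'' = π(H)`, `K'' = π(K)` (so the
rows `H ∩ G' → H → H''` and `K ∩ G' → K → K''` are fiber sequences).  The homotopy fiber
of the functor `Φ : DoubleCoset G H K ⥤ DoubleCoset G'' H'' K''` at the object `g''=π g`
is the comma groupoid `CostructuredArrow Φ ⟨π g⟩`.  The conclusion produces an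
equivalence from `H'\\G'/(K')^g` to this fiber whose underlying map on objects is
`x ↦ x·g`.
-/

open CategoryTheory

universe u

/-- The double quotient groupoid `H\G/K`. -/
structure DoubleCosetGpd (G : Type u) [Group G] (H K : Subgroup G) : Type u where
  elt : G

namespace DoubleCosetGpd

instance category (G : Type u) [Group G] (H K : Subgroup G) :
    Category (DoubleCosetGpd G H K) where
  Hom a b := {p : H × K // (p.1 : G) * a.elt * (p.2 : G) = b.elt}
  id a := ⟨(1, 1), by simp⟩
  comp {a b c} p q := ⟨(q.1.1 * p.1.1, p.1.2 * q.1.2), by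
    have h : ((q.1.1 * p.1.1 : H) : G) * a.elt * ((p.1.2 * q.1.2 : K) : G)
        = (q.1.1 : G) * ((p.1.1 : G) * a.elt * (p.1.2 : G)) * (q.1.2 : G) := by
      push_cast; group
    rw [h, p.2, q.2]⟩
  id_comp f := Subtype.ext (by simp)
  comp_id f := Subtype.ext (by simp)
  assoc f g h := Subtype.ext (by simp [mul_assoc])

variable {G : Type u} [Group G] {H K : Subgroup G}

instance : Groupoid (DoubleCosetGpd G H K) where
  inv {a b} p := ⟨(p.1.1⁻¹, p.1.2⁻¹), by
    obtain ⟨⟨h1, k1⟩, hp⟩ := p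
    dsimp only at hp ⊢
    rw [← hp]
    push_cast
    group⟩
  inv_comp {a b} p := Subtype.ext (by
    show ((p.1.1 * p.1.1⁻¹ : H), (p.1.2⁻¹ * p.1.2 : K)) = ((1 : H), (1 : K))
    simp)
  comp_inv {a b} p := Subtype.ext (by
    show ((p.1.1⁻¹ * p.1.1 : H), (p.1.2 * p.1.2⁻¹ : K)) = ((1 : H), (1 : K))
    simp)

/-- The functor of double-coset groupoids induced by a group homomorphism carrying the
subgroups into the subgroups. -/
def transfer {G G'' : Type u} [Group G] [Group G''] (π : G →* G'')
    (H K : Subgroup G) (H'' K'' : Subgroup G'')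
    (hH : ∀ x ∈ H, π x ∈ H'') (hK : ∀ x ∈ K, π x ∈ K'') :
    DoubleCosetGpd G H K ⥤ DoubleCosetGpd G'' H'' K'' where
  obj a := ⟨π a.elt⟩
  map {a b} p := ⟨(⟨π p.1.1, hH _ p.1.1.2⟩, ⟨π p.1.2, hK _ p.1.2.2⟩), by
    dsimp only
    calc π (p.1.1 : G) * π a.elt * π (p.1.2 : G)
        = π ((p.1.1 : G) * a.elt * (p.1.2 : G)) := by rw [map_mul, map_mul]
      _ = π b.elt := congrArg π p.2⟩
  map_id a := Subtype.ext (Prod.ext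
    (Subtype.ext (by show π ((1 : H) : G) = ((1 : H'') : G''); simp))
    (Subtype.ext (by show π ((1 : K) : G) = ((1 : K'') : G''); simp)))
  map_comp {a b c} p q := Subtype.ext (Prod.ext
    (Subtype.ext (by
      show π ((q.1.1 * p.1.1 : H) : G) = π (q.1.1 : G) * π (p.1.1 : G); simp))
    (Subtype.ext (by
      show π ((p.1.2 * q.1.2 : K) : G) = π (p.1.2 : G) * π (q.1.2 : G); simp)))

end DoubleCosetGpd


namespace DoubleCosetGpd

section Fiber

variable {G G'' : Type u} [Group G] [Group G'']
  (π : G →* G'') (H K : Subgroup G) (H'' K'' : Subgroup G'')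
  (hH : ∀ x ∈ H, π x ∈ H'') (hK : ∀ x ∈ K, π x ∈ K'') (g : G)

lemma mem_K_of_conj {k : G} (hk : k ∈ K.map (MulAut.conj g).toMonoidHom) :
    g⁻¹ * k * g ∈ K := by
  obtain ⟨k₀, hk₀, rfl⟩ := hk
  simpa [MulAut.conj, mul_assoc] using hk₀

/-- The fiber functor `x ↦ (x·g, id)`. -/
def fiberFunctor :
    DoubleCosetGpd π.ker (H.subgroupOf π.ker)
      ((K.map (MulAut.conj g).toMonoidHom).subgroupOf π.ker) ⥤
    CostructuredArrow (DoubleCosetGpd.transfer π H K H'' K'' hH hK)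
      (DoubleCosetGpd.mk (π g)) where
  obj x := CostructuredArrow.mk (Y := DoubleCosetGpd.mk ((x.elt : G) * g))
    ⟨(1, 1), by
      have : π (x.elt : G) = 1 := x.elt.2
      show ((1 : H'') : G'') * π ((x.elt : G) * g) * ((1 : K'') : G'') = π g
      simp [this]⟩
  map {x y} p := CostructuredArrow.homMk
    ⟨(⟨((p.1.1 : π.ker) : G), Subgroup.mem_subgroupOf.mp p.1.1.2⟩,
      ⟨g⁻¹ * ((p.1.2 : π.ker) : G) * g,
        mem_K_of_conj K g (Subgroup.mem_subgroupOf.mp p.1.2.2)⟩),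
      by
        have hp := congrArg (Subtype.val : π.ker → G) p.2
        push_cast at hp
        show ((p.1.1 : π.ker) : G) * ((x.elt : G) * g)
            * (g⁻¹ * ((p.1.2 : π.ker) : G) * g) = (y.elt : G) * g
        rw [← hp]; group⟩
    (by
      apply Subtype.ext
      apply Prod.ext <;> apply Subtype.ext
      · show ((1 : H'') : G'') * π ((p.1.1 : π.ker) : G) = ((1 : H'') : G'')
        have : π ((p.1.1 : π.ker) : G) = 1 := (p.1.1 : π.ker).2
        simp [this]
      · show π (g⁻¹ * ((p.1.2 : π.ker) : G) * g) * ((1 : K'') : G'')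
            = ((1 : K'') : G'')
        have : π ((p.1.2 : π.ker) : G) = 1 := (p.1.2 : π.ker).2
        simp [this])
  map_id x := by
    apply CostructuredArrow.hom_ext
    apply Subtype.ext
    apply Prod.ext <;> apply Subtype.ext
    · rfl
    · show g⁻¹ * 1 * g = (1 : G)
      group
  map_comp {x y z} p q := by
    apply CostructuredArrow.hom_ext
    apply Subtype.ext
    apply Prod.ext <;> apply Subtype.ext
    · show (((q.1.1 * p.1.1 : _) : π.ker) : G)
          = ((q.1.1 : π.ker) : G) * ((p.1.1 : π.ker) : G)
      push_cast; rfl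
    · show g⁻¹ * (((p.1.2 * q.1.2 : _) : π.ker) : G) * g
          = (g⁻¹ * ((p.1.2 : π.ker) : G) * g) * (g⁻¹ * ((q.1.2 : π.ker) : G) * g)
      push_cast; group

lemma fiberFunctor_faithful : (fiberFunctor π H K H'' K'' hH hK g).Faithful where
  map_injective {x y} p q hpq := by
    have h1 := congrArg (fun m => ((m.left.1.1 : G))) hpq
    have h2 := congrArg (fun m => ((m.left.1.2 : G))) hpq
    simp only [fiberFunctor] at h1 h2
    apply Subtype.ext
    apply Prod.ext <;> apply Subtype.ext <;> apply Subtype.ext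
    · exact h1
    · exact mul_left_cancel (a := g⁻¹) (mul_right_cancel (b := g) h2)

lemma fiberFunctor_full : (fiberFunctor π H K H'' K'' hH hK g).Full where
  map_surjective {x y} f := by
    obtain ⟨⟨⟨h, k⟩, hcomm⟩, _, hw⟩ := f
    -- hw : Φ.map _ ≫ _ = _
    have hπh : π (h : G) = 1 := by
      have h1 : ((1 : H'') : G'') * π (h : G) = ((1 : H'') : G'') * ((1 : H'') : G'') :=
        congrArg (fun m => ((m.1.1 : H'') : G'')) hw
      simpa using h1
    have hπk : π (k : G) = 1 := by
      have h2 : π (k : G) * ((1 : K'') : G'') = ((1 : K'') : G'') * ((1 : K'') : G'') :=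
        congrArg (fun m => ((m.1.2 : K'') : G'')) hw
      simpa using h2
    have hcomm' : (h : G) * ((x.elt : G) * g) * (k : G) = (y.elt : G) * g := hcomm
    refine ⟨⟨(⟨⟨(h : G), hπh⟩, Subgroup.mem_subgroupOf.mpr h.2⟩,
      ⟨⟨g * (k : G) * g⁻¹, by
          have : π (g * (k : G) * g⁻¹) = π g * 1 * (π g)⁻¹ := by
            rw [map_mul, map_mul, map_inv, hπk]
          simp only [MonoidHom.mem_ker, this, mul_one, mul_inv_cancel]⟩,
        Subgroup.mem_subgroupOf.mpr ⟨(k : G), k.2, rfl⟩⟩), ?_⟩, ?_⟩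
    · apply Subtype.ext
      show (h : G) * (x.elt : G) * (g * (k : G) * g⁻¹) = (y.elt : G)
      have := mul_right_cancel (b := g)
        (show ((h : G) * (x.elt : G) * (g * (k : G) * g⁻¹)) * g
            = (y.elt : G) * g by rw [← hcomm']; group)
      exact this
    · apply CostructuredArrow.hom_ext
      apply Subtype.ext
      apply Prod.ext <;> apply Subtype.ext
      · rfl
      · show g⁻¹ * (g * (k : G) * g⁻¹) * g = (k : G)
        group

lemma fiberFunctor_essSurj
    (hHs : ∀ y ∈ H'', ∃ x ∈ H, π x = y) (hKs : ∀ y ∈ K'', ∃ x ∈ K, π x = y) :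
    (fiberFunctor π H K H'' K'' hH hK g).EssSurj where
  mem_essImage Y := by
    obtain ⟨a, ⟨⟩, φ⟩ := Y
    obtain ⟨⟨⟨h'', hh''⟩, ⟨k'', hk''⟩⟩, hφ⟩ := φ
    obtain ⟨h, hhH, rfl⟩ := hHs h'' hh''
    obtain ⟨k, hkK, rfl⟩ := hKs k'' hk''
    have hφ' : π h * π a.elt * π k = π g := hφ
    have hker : h * a.elt * k * g⁻¹ ∈ π.ker := by
      simp only [MonoidHom.mem_ker, map_mul, map_inv, hφ', mul_inv_cancel]
    refine ⟨⟨⟨h * a.elt * k * g⁻¹, hker⟩⟩, ⟨CostructuredArrow.isoMk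
      (Groupoid.isoEquivHom _ _ |>.symm
        ⟨(⟨h⁻¹, inv_mem hhH⟩, ⟨k⁻¹, inv_mem hkK⟩), by
          show h⁻¹ * (h * a.elt * k * g⁻¹ * g) * k⁻¹ = a.elt
          group⟩) ?_⟩⟩
    apply Subtype.ext
    apply Prod.ext <;> apply Subtype.ext
    · show π h * π h⁻¹ = (1 : G'')
      rw [map_inv, mul_inv_cancel]
    · show π k⁻¹ * π k = (1 : G'')
      rw [map_inv, inv_mul_cancel]


end Fiber

end DoubleCosetGpd

theorem fiber_of_map_of_double_quotients
    (G G'' : Type u) [Group G] [Group G'']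
    -- the fiber sequence `G' → G → G''`, with `G' = ker π`
    (π : G →* G'') (hπ : Function.Surjective π)
    -- subgroups `H, K ≤ G` and the fiber sequences `H' → H → H''`, `K' → K → K''`
    -- (so `H'' = π(H)`, `K'' = π(K)`, `H' = H ∩ G'`, `K' = K ∩ G'`)
    (H K : Subgroup G) (H'' K'' : Subgroup G'')
    (hH : H.map π = H'') (hK : K.map π = K'')
    -- a lift `g ∈ G` of the point `g'' = π g ∈ H''\G''/K''`
    (g : G) :
    ∃ E : DoubleCosetGpd π.ker (H.subgroupOf π.ker)
            ((K.map (MulAut.conj g).toMonoidHom).subgroupOf π.ker) ≌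
          CostructuredArrow
            (DoubleCosetGpd.transfer π H K H'' K''
              (fun x hx => hH ▸ Subgroup.mem_map_of_mem π hx)
              (fun x hx => hK ▸ Subgroup.mem_map_of_mem π hx))
            (DoubleCosetGpd.mk (π g)),
      -- the equivalence descends from the map `G' → F_{g''}`, `x ↦ H''·x·g·K''`
      ∀ x, ((E.functor.obj x).left).elt = (x.elt : G) * g := by
  set hH' : ∀ x ∈ H, π x ∈ H'' := fun x hx => hH ▸ Subgroup.mem_map_of_mem π hx with hH'def
  set hK' : ∀ x ∈ K, π x ∈ K'' := fun x hx => hK ▸ Subgroup.mem_map_of_mem π hx with hK'def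
  letI := DoubleCosetGpd.fiberFunctor_faithful π H K H'' K'' hH' hK' g
  letI := DoubleCosetGpd.fiberFunctor_full π H K H'' K'' hH' hK' g
  letI := DoubleCosetGpd.fiberFunctor_essSurj π H K H'' K'' hH' hK' g
    (fun y hy => by subst hH; obtain ⟨x, hx, rfl⟩ := hy; exact ⟨x, hx, rfl⟩)
    (fun y hy => by subst hK; obtain ⟨x, hx, rfl⟩ := hy; exact ⟨x, hx, rfl⟩)
  letI : (DoubleCosetGpd.fiberFunctor π H K H'' K'' hH' hK' g).IsEquivalence := { }
  exact ⟨(DoubleCosetGpd.fiberFunctor π H K H'' K'' hH' hK' g).asEquivalence,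
    fun x => rfl⟩
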